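/- Let G ∈ ℂ[[x]] with v(G) = 1 and leading coefficient 1, and fix q ∈ ℚ_{>0} and c ∈ ℂ \ {0}. Then there exists exactly one Puiseux series h ∈ K̂ with initial term c·x^q satisfying the functional-differential equation q · (G ∘ h) = h' · G. -/

import Mathlib

open HahnSeries

noncomputable section

abbrev Khat := HahnSeries ℚ ℂ

/-- A Hahn series is a Puiseux series if its support lies in `(1/d)ℤ` for some `d ≥ 1`. -/
def IsPuiseux (f : Khat) : Prop :=
  ∃ d : ℕ, 0 < d ∧ ∀ q ∈ f.support, ∃ n : ℤ, q = (n : ℚ) / d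

/-- Formal derivative of a Hahn/Puiseux series. -/
def D (f : Khat) : Khat where
  coeff q := ((q + 1 : ℚ) : ℂ) * f.coeff (q + 1)
  isPWO_support' := by
    have hsub : (Function.support fun q : ℚ => ((q + 1 : ℚ) : ℂ) * f.coeff (q + 1)) ⊆
        (fun q : ℚ => q - 1) '' f.support := by
      intro q hq
      have : f.coeff (q + 1) ≠ 0 := by
        intro h0
        apply hq
        simp [h0]
      exact ⟨q + 1, this, by ring⟩
    exact (Set.IsPWO.image_of_monotone f.isPWO_support
      (fun a b hab => by simpa using sub_le_sub_right hab 1)).mono hsub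

/-- Formal integral of a Hahn/Puiseux series (dropping any `x⁻¹` term). -/
def integ (f : Khat) : Khat where
  coeff q := if q = 0 then 0 else f.coeff (q - 1) / ((q : ℚ) : ℂ)
  isPWO_support' := by
    have hsub : (Function.support fun q : ℚ => if q = 0 then 0 else f.coeff (q - 1) / ((q : ℚ) : ℂ)) ⊆
        (fun q : ℚ => q + 1) '' f.support := by
      intro q hq
      simp only [Function.mem_support] at hq
      by_cases h0 : q = 0
      · simp [h0] at hq
      · have : f.coeff (q - 1) ≠ 0 := by
          intro h; simp [h0, h] at hq
        exact ⟨q - 1, this, by ring⟩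
    exact (Set.IsPWO.image_of_monotone f.isPWO_support
      (fun a b hab => by simpa using add_le_add_right hab 1)).mono hsub

/-- Composition `F ∘ h` of a power series `F` with a Hahn series `h` of positive order. -/
def hcomp (F : PowerSeries ℂ) (h : Khat) : Khat :=
  if hh : 0 < h.orderTop then
    HahnSeries.SummableFamily.hsum
      { toFun := fun n => (PowerSeries.coeff n F) • h ^ n
        isPWO_iUnion_support' := by
          refine ((HahnSeries.SummableFamily.powers h).isPWO_iUnion_support).mono ?_
          refine Set.iUnion_mono fun n => ?_
          intro q hq
          simp only [HahnSeries.mem_support, HahnSeries.coeff_smul] at hq ⊢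
          intro h0
          simp only [HahnSeries.SummableFamily.powers_toFun, hh, if_true] at h0
          exact hq (by rw [h0, smul_zero])
        finite_co_support' := fun g => by
          refine ((HahnSeries.SummableFamily.powers h).finite_co_support g).subset ?_
          intro n hn
          simp only [Set.mem_setOf_eq, HahnSeries.coeff_smul, ne_eq] at hn ⊢
          intro h0
          simp only [HahnSeries.SummableFamily.powers_toFun, hh, if_true] at h0
          exact hn (by rw [h0, smul_zero]) }
  else 0

/-- The embedding of power series into Hahn series over `ℚ`. -/
def ofPS : PowerSeries ℂ →+* Khat := HahnSeries.ofPowerSeries ℚ ℂ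

/-- Logarithmic derivative. -/
def ld (u : Khat) : Khat := D u / u

end
noncomputable section MyAux
open HahnSeries

/-- The summable family used in `hcomp`. -/
def fam (F : PowerSeries ℂ) (h : Khat) (hh : 0 < h.orderTop) :
    HahnSeries.SummableFamily ℚ ℂ ℕ :=
    { toFun := fun n => (PowerSeries.coeff n F) • h ^ n
      isPWO_iUnion_support' := by
        refine ((HahnSeries.SummableFamily.powers h).isPWO_iUnion_support).mono ?_
        refine Set.iUnion_mono fun n => ?_
        intro q hq
        simp only [HahnSeries.mem_support, HahnSeries.coeff_smul] at hq ⊢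
        intro h0
        simp only [HahnSeries.SummableFamily.powers_toFun, hh, if_true] at h0
        exact hq (by rw [h0, smul_zero])
      finite_co_support' := fun g => by
        refine ((HahnSeries.SummableFamily.powers h).finite_co_support g).subset ?_
        intro n hn
        simp only [Set.mem_setOf_eq, HahnSeries.coeff_smul, ne_eq] at hn ⊢
        intro h0
        simp only [HahnSeries.SummableFamily.powers_toFun, hh, if_true] at h0
        exact hn (by rw [h0, smul_zero]) }

lemma hcomp_of_pos (F : PowerSeries ℂ) (h : Khat) (hh : 0 < h.orderTop) :
    hcomp F h = (fam F h hh).hsum := by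
  rw [hcomp, dif_pos hh]; rfl

lemma hcomp_coeff (F : PowerSeries ℂ) (h : Khat) (hh : 0 < h.orderTop) (s : ℚ) :
    (hcomp F h).coeff s = ∑ᶠ n : ℕ, ((PowerSeries.coeff n F) • h ^ n).coeff s := by
  rw [hcomp_of_pos F h hh, HahnSeries.SummableFamily.coeff_hsum]; rfl

lemma hcomp_cosupp (F : PowerSeries ℂ) (h : Khat) (hh : 0 < h.orderTop) (s : ℚ) :
    (Function.support fun n : ℕ => ((PowerSeries.coeff n F) • h ^ n).coeff s).Finite :=
  (fam F h hh).finite_co_support s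

/-- `h` has no coefficients below `α`. -/
def LB (α : ℚ) (h : Khat) : Prop := ∀ t : ℚ, t < α → h.coeff t = 0

lemma LB.mono {α β : ℚ} {h : Khat} (hl : LB α h) (hle : β ≤ α) : LB β h :=
  fun t ht => hl t (lt_of_lt_of_le ht hle)

lemma LB.orderTop {α : ℚ} {h : Khat} (hl : LB α h) : (α : WithTop ℚ) ≤ h.orderTop := by
  by_contra hlt
  push_neg at hlt
  have hne : h.orderTop ≠ ⊤ := fun ht => by simp [ht] at hlt
  obtain ⟨g, hg⟩ := WithTop.ne_top_iff_exists.mp hne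
  have hglt : g < α := by exact_mod_cast hg ▸ hlt
  exact HahnSeries.coeff_orderTop_ne hg.symm (hl g hglt)

lemma LB.sub {α : ℚ} {a b : Khat} (ha : LB α a) (hb : LB α b) : LB α (a - b) := by
  intro t ht
  rw [HahnSeries.coeff_sub, ha t ht, hb t ht, sub_zero]

lemma LB.add {α : ℚ} {a b : Khat} (ha : LB α a) (hb : LB α b) : LB α (a + b) := by
  intro t ht
  rw [HahnSeries.coeff_add, ha t ht, hb t ht, add_zero]

lemma LB.mul {α β : ℚ} {a b : Khat} (ha : LB α a) (hb : LB β b) : LB (α + β) (a * b) := by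
  intro t ht
  rw [HahnSeries.coeff_mul]
  refine Finset.sum_eq_zero fun ij hij => ?_
  rw [Finset.mem_addAntidiagonal] at hij
  obtain ⟨h1, h2, h3⟩ := hij
  by_cases hx : ij.1 < α
  · rw [ha ij.1 hx, zero_mul]
  by_cases hy : ij.2 < β
  · rw [hb ij.2 hy, mul_zero]
  push_neg at hx hy
  exact absurd (h3 ▸ add_le_add hx hy) (not_le.mpr ht)

lemma LB.pow {α : ℚ} {h : Khat} (hl : LB α h) (hα : 0 ≤ α) :
    ∀ n : ℕ, LB ((n : ℚ) * α) (h ^ n)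
  | 0 => by
    intro t ht
    simp only [Nat.cast_zero, zero_mul] at ht
    rw [pow_zero]
    rw [HahnSeries.coeff_one, if_neg (by exact ne_of_lt ht)]
  | n + 1 => by
    have := (hl.pow hα n).mul hl
    rw [pow_succ]
    refine this.mono ?_
    push_cast
    nlinarith

lemma mul_coeff_lb {α β : ℚ} {a b : Khat} (ha : LB α a) (hb : LB β b) :
    (a * b).coeff (α + β) = a.coeff α * b.coeff β := by
  rw [HahnSeries.coeff_mul]
  rw [Finset.sum_eq_single ((α, β) : ℚ × ℚ)]
  · rintro ⟨x, y⟩ hmem hne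
    rw [Finset.mem_addAntidiagonal] at hmem
    obtain ⟨h1, h2, h3⟩ := hmem
    by_cases hx : x < α
    · exact absurd (ha x hx) h1
    by_cases hy : y < β
    · exact absurd (hb y hy) h2
    push_neg at hx hy
    have hxe : x = α := le_antisymm (by linarith) hx
    have hye : y = β := by linarith
    simp [hxe, hye] at hne
  · intro hnot
    by_cases h1 : a.coeff α = 0
    · rw [h1, zero_mul]
    by_cases h2 : b.coeff β = 0
    · rw [h2, mul_zero]
    exact absurd (Finset.mem_addAntidiagonal.mpr ⟨Function.mem_support.mpr h1, Function.mem_support.mpr h2, rfl⟩) hnot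
lemma D_coeff (f : Khat) (s : ℚ) : (D f).coeff s = ((s + 1 : ℚ) : ℂ) * f.coeff (s + 1) := rfl

lemma D_sub (a b : Khat) : D (a - b) = D a - D b := by
  ext s
  rw [HahnSeries.coeff_sub, D_coeff, D_coeff, D_coeff, HahnSeries.coeff_sub, mul_sub]

lemma D_zero : D (0 : Khat) = 0 := by
  ext s
  rw [D_coeff, HahnSeries.coeff_zero, HahnSeries.coeff_zero, mul_zero]

lemma LB.D {α : ℚ} {h : Khat} (hl : LB α h) : LB (α - 1) (_root_.D h) := by
  intro t ht
  rw [D_coeff, hl (t + 1) (by linarith), mul_zero]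

lemma ofPS_coeff_nat (F : PowerSeries ℂ) (n : ℕ) :
    (ofPS F).coeff (n : ℚ) = PowerSeries.coeff n F :=
  HahnSeries.ofPowerSeries_apply_coeff F n

lemma ofPS_coeff_eq_zero (F : PowerSeries ℂ) (t : ℚ) (ht : ¬ ∃ n : ℕ, t = (n : ℚ)) :
    (ofPS F).coeff t = 0 := by
  rw [ofPS, HahnSeries.ofPowerSeries_apply]
  refine HahnSeries.embDomain_notin_range ?_
  rintro ⟨n, hn⟩
  exact ht ⟨n, hn.symm⟩

lemma LB_ofPS (F : PowerSeries ℂ) (hF0 : PowerSeries.coeff 0 F = 0) : LB 1 (ofPS F) := by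
  intro t ht
  by_cases h0 : t = 0
  · subst h0
    have := ofPS_coeff_nat F 0
    simpa using this.trans hF0
  · refine ofPS_coeff_eq_zero F t ?_
    rintro ⟨n, rfl⟩
    rcases n with - | m
    · exact h0 (by norm_num)
    · have : (1 : ℚ) ≤ (m + 1 : ℕ) := by exact_mod_cast Nat.succ_le_succ (Nat.zero_le m)
      linarith

lemma hcomp_zero (F : PowerSeries ℂ) (hF0 : PowerSeries.coeff 0 F = 0) : hcomp F 0 = 0 := by
  have hh : 0 < (0 : Khat).orderTop := by
    rw [HahnSeries.orderTop_zero]; exact WithTop.coe_lt_top 0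
  ext s
  rw [hcomp_coeff F 0 hh s, HahnSeries.coeff_zero]
  refine finsum_eq_zero_of_forall_eq_zero fun n => ?_
  rcases n with - | m
  · rw [hF0]; simp
  · rw [zero_pow (Nat.succ_ne_zero m), smul_zero, HahnSeries.coeff_zero]

lemma LB.sum {ι : Type*} {α : ℚ} {s : Finset ι} {f : ι → Khat}
    (h : ∀ i ∈ s, LB α (f i)) : LB α (∑ i ∈ s, f i) := by
  classical
  induction s using Finset.induction with
  | empty => intro t ht; simp
  | insert _ _ hx ih =>
    rw [Finset.sum_insert hx]
    exact (h _ (Finset.mem_insert_self _ _)).add (ih fun i hi => h i (Finset.mem_insert_of_mem hi))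

lemma hcomp_sub_coeff (F : PowerSeries ℂ) {qr : ℚ} (hq : 0 < qr) {h₁ h₂ : Khat}
    (hl₁ : LB qr h₁) (hl₂ : LB qr h₂) {s : ℚ} (hs : qr ≤ s)
    (hagree : ∀ t, t < s → h₁.coeff t = h₂.coeff t) :
    (hcomp F h₁).coeff s - (hcomp F h₂).coeff s
      = (PowerSeries.coeff 1 F) * (h₁.coeff s - h₂.coeff s) := by
  have hh₁ : 0 < h₁.orderTop := lt_of_lt_of_le (by exact_mod_cast hq) hl₁.orderTop
  have hh₂ : 0 < h₂.orderTop := lt_of_lt_of_le (by exact_mod_cast hq) hl₂.orderTop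
  rw [hcomp_coeff F h₁ hh₁ s, hcomp_coeff F h₂ hh₂ s,
    ← finsum_sub_distrib (hcomp_cosupp F h₁ hh₁ s) (hcomp_cosupp F h₂ hh₂ s)]
  rw [finsum_eq_single _ 1 ?_]
  · rw [pow_one, pow_one, HahnSeries.coeff_smul, HahnSeries.coeff_smul, smul_eq_mul,
      smul_eq_mul, mul_sub]
  · intro n hn
    rcases n with - | m
    · rw [pow_zero, pow_zero, sub_self]
    · set n := m + 1 with hn'
      have hn2 : 2 ≤ n := by omega
      have key : (h₁ ^ n).coeff s = (h₂ ^ n).coeff s := by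
        have hδ : LB s (h₁ - h₂) := fun t ht => by
          rw [HahnSeries.coeff_sub, hagree t ht, sub_self]
        have hgeom : LB qr (∑ i ∈ Finset.range n, h₁ ^ i * h₂ ^ (n - 1 - i)) := by
          refine LB.sum fun i hi => ?_
          rw [Finset.mem_range] at hi
          have hcast : (1 : ℚ) ≤ ((i + (n - 1 - i) : ℕ) : ℚ) := by
            have : 1 ≤ i + (n - 1 - i) := by omega
            exact_mod_cast this
          refine ((hl₁.pow hq.le i).mul (hl₂.pow hq.le (n - 1 - i))).mono ?_
          push_cast at hcast ⊢
          nlinarith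
        have hprod := hgeom.mul hδ
        have hzero : (h₁ ^ n - h₂ ^ n).coeff s = 0 := by
          rw [← geom_sum₂_mul h₁ h₂ n]
          exact hprod s (by linarith)
        rw [HahnSeries.coeff_sub, sub_eq_zero] at hzero
        exact hzero
      rw [HahnSeries.coeff_smul, HahnSeries.coeff_smul, key, sub_self]
/-- The defining operator: `E(h) = q·(G∘h) - h'·G`. -/
def Eop (F : PowerSeries ℂ) (qr : ℚ) (h : Khat) : Khat :=
  (qr : ℂ) • hcomp F h - D h * ofPS F

lemma Eop_zero (F : PowerSeries ℂ) (qr : ℚ) (hF0 : PowerSeries.coeff 0 F = 0) :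
    Eop F qr 0 = 0 := by
  rw [Eop, hcomp_zero F hF0, D_zero, smul_zero, zero_mul, sub_zero]

lemma Ediff (F : PowerSeries ℂ) (hF0 : PowerSeries.coeff 0 F = 0)
    (hF1 : PowerSeries.coeff 1 F = 1) {qr : ℚ} (hq : 0 < qr) {h₁ h₂ : Khat}
    (hl₁ : LB qr h₁) (hl₂ : LB qr h₂) {s : ℚ} (hs : qr ≤ s)
    (hagree : ∀ t, t < s → h₁.coeff t = h₂.coeff t) :
    (Eop F qr h₁).coeff s - (Eop F qr h₂).coeff s
      = ((qr : ℂ) - (s : ℂ)) * (h₁.coeff s - h₂.coeff s) := by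
  have hδ : LB s (h₁ - h₂) := fun t ht => by
    rw [HahnSeries.coeff_sub, hagree t ht, sub_self]
  have h1 : ((D (h₁ - h₂)) * ofPS F).coeff ((s - 1) + 1)
      = (D (h₁ - h₂)).coeff (s - 1) * (ofPS F).coeff 1 :=
    mul_coeff_lb hδ.D (LB_ofPS F hF0)
  rw [show s - 1 + 1 = s from by ring] at h1
  have h2 : (ofPS F).coeff (1 : ℚ) = 1 := by
    have := ofPS_coeff_nat F 1
    rw [Nat.cast_one] at this
    rw [this, hF1]
  have h3 : (D (h₁ - h₂)).coeff (s - 1) = (s : ℂ) * ((h₁ - h₂).coeff s) := by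
    rw [D_coeff, show s - 1 + 1 = s from by ring]
  have h4 : (D h₁ * ofPS F).coeff s - (D h₂ * ofPS F).coeff s
      = (s : ℂ) * (h₁.coeff s - h₂.coeff s) := by
    have h5 : ((D h₁ - D h₂) * ofPS F).coeff s = (s : ℂ) * (h₁.coeff s - h₂.coeff s) := by
      rw [← D_sub, h1, h2, h3, mul_one, HahnSeries.coeff_sub]
    rw [sub_mul, HahnSeries.coeff_sub] at h5
    exact h5
  have hC := hcomp_sub_coeff F hq hl₁ hl₂ hs hagree
  rw [hF1, one_mul] at hC
  rw [Eop, Eop, HahnSeries.coeff_sub, HahnSeries.coeff_sub, HahnSeries.coeff_smul,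
    HahnSeries.coeff_smul, smul_eq_mul, smul_eq_mul]
  linear_combination (qr : ℂ) * hC - h4

/-- Supported on `(1/d)·ℤ`. -/
def Zl (d : ℕ) (h : Khat) : Prop := ∀ t : ℚ, h.coeff t ≠ 0 → ∃ n : ℤ, t = (n : ℚ) / d

lemma Zl.mul {d : ℕ} {a b : Khat} (ha : Zl d a) (hb : Zl d b) : Zl d (a * b) := by
  intro t ht
  have hmem : t ∈ (a * b).support := ht
  have hm2 := HahnSeries.support_mul_subset hmem
  rw [Set.mem_add] at hm2
  obtain ⟨x, hx, y, hy, rfl⟩ := hm2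
  obtain ⟨n, rfl⟩ := ha x hx
  obtain ⟨m, rfl⟩ := hb y hy
  exact ⟨n + m, by push_cast; rw [add_div]⟩

lemma Zl.one {d : ℕ} : Zl d (1 : Khat) := by
  intro t ht
  rw [HahnSeries.coeff_one] at ht
  by_cases h0 : t = 0
  · exact ⟨0, by simp [h0]⟩
  · exact absurd (if_neg h0) ht

lemma Zl.pow {d : ℕ} {a : Khat} (ha : Zl d a) : ∀ n : ℕ, Zl d (a ^ n)
  | 0 => by rw [pow_zero]; exact Zl.one
  | n + 1 => by rw [pow_succ]; exact (ha.pow n).mul ha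

lemma Zl.D {d : ℕ} {h : Khat} (hd : d ≠ 0) (ha : Zl d h) : Zl d (_root_.D h) := by
  intro t ht
  rw [D_coeff] at ht
  have h2 : h.coeff (t + 1) ≠ 0 := right_ne_zero_of_mul ht
  obtain ⟨n, hn⟩ := ha _ h2
  refine ⟨n - d, ?_⟩
  have hd' : ((d : ℚ)) ≠ 0 := by exact_mod_cast hd
  push_cast
  rw [sub_div, div_self hd']
  linarith

lemma Zl.ofPS {d : ℕ} (hd : d ≠ 0) (F : PowerSeries ℂ) : Zl d (ofPS F) := by
  intro t ht
  have h2 : ∃ n : ℕ, t = (n : ℚ) := by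
    by_contra h
    exact ht (ofPS_coeff_eq_zero F t h)
  obtain ⟨n, rfl⟩ := h2
  refine ⟨n * d, ?_⟩
  have hd' : ((d : ℚ)) ≠ 0 := by exact_mod_cast hd
  push_cast
  rw [mul_div_assoc, div_self hd', mul_one]
/-- Next coefficient in the recursive construction. -/
def nextc (F : PowerSeries ℂ) (qr : ℚ) (c : ℂ) (P : Khat) (k : ℕ) : ℂ :=
  if k = 0 then c
  else (Eop F qr P).coeff (qr + (k : ℚ) / qr.den) / (((k : ℚ) / qr.den : ℚ) : ℂ)

/-- Partial sums of the solution. -/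
def seqq (F : PowerSeries ℂ) (qr : ℚ) (c : ℂ) : ℕ → Khat
  | 0 => 0
  | k + 1 => seqq F qr c k
      + (nextc F qr c (seqq F qr c k) k) • HahnSeries.single (qr + (k : ℚ) / qr.den) (1 : ℂ)

lemma range_isPWO (qr : ℚ) : (Set.range fun k : ℕ => qr + (k : ℚ) / qr.den).IsPWO := by
  rw [← Set.image_univ]
  refine Set.IsPWO.image_of_monotone ?_ ?_
  · exact (Set.isWF_univ_iff.mpr ⟨wellFounded_lt⟩).isPWO
  · intro a b hab
    have hd : (0 : ℚ) < qr.den := by exact_mod_cast qr.den_pos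
    have hab' : (a : ℚ) ≤ (b : ℚ) := by exact_mod_cast hab
    exact add_le_add_right ((div_le_div_iff_of_pos_right hd).mpr hab') qr

open Classical in
/-- Coefficients of the solution. -/
def solfun (F : PowerSeries ℂ) (qr : ℚ) (c : ℂ) (s : ℚ) : ℂ :=
  if hs : ∃ k : ℕ, s = qr + (k : ℚ) / qr.den
    then nextc F qr c (seqq F qr c hs.choose) hs.choose else 0

/-- The solution. -/
def sol (F : PowerSeries ℂ) (qr : ℚ) (c : ℂ) : Khat where
  coeff := solfun F qr c
  isPWO_support' := by
    refine (range_isPWO qr).mono ?_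
    intro s hs
    rw [Function.mem_support] at hs
    by_cases h : ∃ k : ℕ, s = qr + (k : ℚ) / qr.den
    · obtain ⟨k, rfl⟩ := h; exact ⟨k, rfl⟩
    · rw [solfun, dif_neg h] at hs; exact absurd rfl hs

lemma exp_inj (qr : ℚ) {k l : ℕ} (h : qr + (k : ℚ) / qr.den = qr + (l : ℚ) / qr.den) :
    k = l := by
  have hd : ((qr.den : ℚ)) ≠ 0 := by
    have := qr.den_pos
    positivity
  have h' := add_left_cancel h
  field_simp [hd] at h'
  exact_mod_cast h'

lemma sol_coeff (F : PowerSeries ℂ) (qr : ℚ) (c : ℂ) (k : ℕ) :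
    (sol F qr c).coeff (qr + (k : ℚ) / qr.den) = nextc F qr c (seqq F qr c k) k := by
  have hs : ∃ j : ℕ, qr + (k : ℚ) / qr.den = qr + (j : ℚ) / qr.den := ⟨k, rfl⟩
  show solfun F qr c _ = _
  rw [solfun, dif_pos hs]
  have hk : hs.choose = k := (exp_inj qr hs.choose_spec).symm
  rw [hk]

lemma sol_coeff_zero (F : PowerSeries ℂ) (qr : ℚ) (c : ℂ) {s : ℚ}
    (hs : ¬ ∃ k : ℕ, s = qr + (k : ℚ) / qr.den) : (sol F qr c).coeff s = 0 := by
  show solfun F qr c _ = _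
  rw [solfun, dif_neg hs]
lemma sol_LB (F : PowerSeries ℂ) (qr : ℚ) (c : ℂ) : LB qr (sol F qr c) := by
  intro t ht
  refine sol_coeff_zero F qr c ?_
  rintro ⟨k, rfl⟩
  have : (0 : ℚ) ≤ (k : ℚ) / qr.den := by positivity
  linarith

lemma sol_Zl (F : PowerSeries ℂ) (qr : ℚ) (c : ℂ) : Zl qr.den (sol F qr c) := by
  intro t ht
  have h2 : ∃ k : ℕ, t = qr + (k : ℚ) / qr.den := by
    by_contra h
    exact ht (sol_coeff_zero F qr c h)
  obtain ⟨k, rfl⟩ := h2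
  refine ⟨qr.num + k, ?_⟩
  push_cast
  rw [add_div, Rat.num_div_den]

lemma seqq_coeff_ge (F : PowerSeries ℂ) (qr : ℚ) (c : ℂ) :
    ∀ (k : ℕ) (t : ℚ), qr + (k : ℚ) / qr.den ≤ t → (seqq F qr c k).coeff t = 0
  | 0, t, ht => HahnSeries.coeff_zero
  | k + 1, t, ht => by
    have hd : (0 : ℚ) < qr.den := by exact_mod_cast qr.den_pos
    have hlt : qr + (k : ℚ) / qr.den < qr + ((k + 1 : ℕ) : ℚ) / qr.den := by
      have : (k : ℚ) / qr.den < ((k : ℚ) + 1) / qr.den := by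
        rw [div_lt_div_iff_of_pos_right hd]
        linarith
      push_cast
      linarith
    rw [seqq, HahnSeries.coeff_add, HahnSeries.coeff_smul,
      seqq_coeff_ge F qr c k t (le_trans hlt.le ht),
      HahnSeries.coeff_single_of_ne (by intro h; rw [h] at ht; exact absurd ht (not_le.mpr hlt))]
    simp

lemma seqq_coeff_lt (F : PowerSeries ℂ) (qr : ℚ) (c : ℂ) :
    ∀ (k : ℕ) (t : ℚ), t < qr + (k : ℚ) / qr.den →
      (seqq F qr c k).coeff t = (sol F qr c).coeff t
  | 0, t, ht => by
    rw [show ((0 : ℕ) : ℚ) / qr.den = 0 by norm_num, add_zero] at ht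
    rw [show (seqq F qr c 0) = 0 from rfl, HahnSeries.coeff_zero, sol_LB F qr c t ht]
  | k + 1, t, ht => by
    have hd : (0 : ℚ) < qr.den := by exact_mod_cast qr.den_pos
    rw [seqq, HahnSeries.coeff_add, HahnSeries.coeff_smul]
    by_cases hcase : t < qr + (k : ℚ) / qr.den
    · rw [seqq_coeff_lt F qr c k t hcase,
        HahnSeries.coeff_single_of_ne (ne_of_lt hcase), smul_zero, add_zero]
    push_neg at hcase
    by_cases heq : t = qr + (k : ℚ) / qr.den
    · rw [heq, HahnSeries.coeff_single_same, seqq_coeff_ge F qr c k _ le_rfl,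
        sol_coeff F qr c k, smul_eq_mul, mul_one, zero_add]
    · -- qr + k/d < t < qr + (k+1)/d : all three terms vanish
      rw [seqq_coeff_ge F qr c k t hcase, HahnSeries.coeff_single_of_ne heq, smul_zero,
        add_zero]
      refine (sol_coeff_zero F qr c ?_).symm
      rintro ⟨j, rfl⟩
      have h1 : (k : ℚ) / qr.den ≤ (j : ℚ) / qr.den := by linarith
      have h2 : (j : ℚ) / qr.den < ((k + 1 : ℕ) : ℚ) / qr.den := by push_cast at ht ⊢; linarith
      rw [div_le_div_iff_of_pos_right hd] at h1
      rw [div_lt_div_iff_of_pos_right hd] at h2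
      have hk : k ≤ j := by exact_mod_cast h1
      have hj : j < k + 1 := by exact_mod_cast h2
      exact heq (by rw [show j = k from by omega])

lemma seqq_LB (F : PowerSeries ℂ) (qr : ℚ) (c : ℂ) (k : ℕ) : LB qr (seqq F qr c k) := by
  intro t ht
  have h1 : t < qr + (k : ℚ) / qr.den := by
    have : (0 : ℚ) ≤ (k : ℚ) / qr.den := by positivity
    linarith
  rw [seqq_coeff_lt F qr c k t h1]
  exact sol_LB F qr c t ht
lemma LB.csmul {α : ℚ} {h : Khat} (z : ℂ) (hl : LB α h) : LB α (z • h) := by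
  intro t ht
  rw [HahnSeries.coeff_smul, hl t ht, smul_zero]

lemma LB_hcomp (F : PowerSeries ℂ) (hF0 : PowerSeries.coeff 0 F = 0) {qr : ℚ}
    (hq : 0 < qr) {h : Khat} (hl : LB qr h) : LB qr (hcomp F h) := by
  have hh : 0 < h.orderTop := lt_of_lt_of_le (by exact_mod_cast hq) hl.orderTop
  intro t ht
  rw [hcomp_coeff F h hh t]
  refine finsum_eq_zero_of_forall_eq_zero fun n => ?_
  rcases n with - | m
  · rw [pow_zero, hF0]; simp
  · rw [HahnSeries.coeff_smul, (hl.pow hq.le (m + 1)) t ?_, smul_zero]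
    have h1 : (1 : ℚ) ≤ ((m + 1 : ℕ) : ℚ) := by exact_mod_cast Nat.one_le_iff_ne_zero.mpr (Nat.succ_ne_zero m)
    nlinarith

lemma LB_Eop (F : PowerSeries ℂ) (hF0 : PowerSeries.coeff 0 F = 0) {qr : ℚ}
    (hq : 0 < qr) {h : Khat} (hl : LB qr h) : LB qr (Eop F qr h) := by
  have h1 : LB qr ((qr : ℂ) • hcomp F h) := (LB_hcomp F hF0 hq hl).csmul _
  have h2 : LB (qr - 1 + 1) (D h * ofPS F) := hl.D.mul (LB_ofPS F hF0)
  rw [show qr - 1 + 1 = qr from by ring] at h2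
  exact h1.sub h2

lemma sol_coeff_base (F : PowerSeries ℂ) (qr : ℚ) (c : ℂ) : (sol F qr c).coeff qr = c := by
  have h := sol_coeff F qr c 0
  rw [show ((0 : ℕ) : ℚ) / qr.den = 0 from by norm_num, add_zero] at h
  rw [h, nextc, if_pos rfl]

lemma Esol (F : PowerSeries ℂ) (hF0 : PowerSeries.coeff 0 F = 0)
    (hF1 : PowerSeries.coeff 1 F = 1) {qr : ℚ} (hq : 0 < qr) (c : ℂ) :
    Eop F qr (sol F qr c) = 0 := by
  have hd : (0 : ℚ) < qr.den := by exact_mod_cast qr.den_pos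
  have hdne : qr.den ≠ 0 := qr.den_nz
  ext s
  rw [HahnSeries.coeff_zero]
  by_cases hcase : ∃ k : ℕ, s = qr + (k : ℚ) / qr.den
  · obtain ⟨k, rfl⟩ := hcase
    have hs : qr ≤ qr + (k : ℚ) / qr.den := by
      have : (0 : ℚ) ≤ (k : ℚ) / qr.den := by positivity
      linarith
    have hagree : ∀ t, t < qr + (k : ℚ) / qr.den →
        (sol F qr c).coeff t = (seqq F qr c k).coeff t :=
      fun t ht => (seqq_coeff_lt F qr c k t ht).symm
    have hdiff := Ediff F hF0 hF1 hq (sol_LB F qr c) (seqq_LB F qr c k) hs hagree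
    rw [seqq_coeff_ge F qr c k _ le_rfl, sub_zero] at hdiff
    rcases Nat.eq_zero_or_pos k with hk | hk
    · subst hk
      rw [show ((0 : ℕ) : ℚ) / qr.den = 0 from by norm_num, add_zero] at hdiff ⊢
      rw [show seqq F qr c 0 = 0 from rfl, Eop_zero F qr hF0, HahnSeries.coeff_zero,
        sub_zero] at hdiff
      rw [hdiff, sub_self, zero_mul]
    · have hkne : k ≠ 0 := Nat.pos_iff_ne_zero.mp hk
      have hx : ((((k : ℚ) / qr.den : ℚ)) : ℂ) ≠ 0 := by
        rw [ne_eq, Rat.cast_eq_zero]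
        positivity
      have hsolc : (sol F qr c).coeff (qr + (k : ℚ) / qr.den)
          = (Eop F qr (seqq F qr c k)).coeff (qr + (k : ℚ) / qr.den)
            / ((((k : ℚ) / qr.den : ℚ)) : ℂ) := by
        rw [sol_coeff F qr c k, nextc, if_neg hkne]
      have hfac : (qr : ℂ) - ((qr + (k : ℚ) / qr.den : ℚ) : ℂ)
          = -((((k : ℚ) / qr.den : ℚ)) : ℂ) := by push_cast; ring
      rw [hsolc, hfac] at hdiff
      have hmm : -((((k : ℚ) / qr.den : ℚ)) : ℂ)
            * ((Eop F qr (seqq F qr c k)).coeff (qr + (k : ℚ) / qr.den)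
                / ((((k : ℚ) / qr.den : ℚ)) : ℂ))
          = -(Eop F qr (seqq F qr c k)).coeff (qr + (k : ℚ) / qr.den) := by
        rw [neg_mul, mul_comm, div_mul_cancel₀ _ hx]
      rw [hmm] at hdiff
      linear_combination hdiff
  · by_cases hlow : s < qr
    · exact LB_Eop F hF0 hq (sol_LB F qr c) s hlow
    push_neg at hlow
    have hkey : ∀ x : Khat, Zl qr.den x → x.coeff s = 0 := by
      intro x hx
      by_contra hne
      obtain ⟨m, hm⟩ := hx s hne
      have hnum : ((qr.num : ℚ)) / qr.den ≤ (m : ℚ) / qr.den := by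
        rw [Rat.num_div_den qr, ← hm]
        exact hlow
      rw [div_le_div_iff_of_pos_right hd] at hnum
      have hmn : qr.num ≤ m := by exact_mod_cast hnum
      refine hcase ⟨(m - qr.num).toNat, ?_⟩
      have h3 : (((m - qr.num).toNat : ℕ) : ℚ) = (m : ℚ) - (qr.num : ℚ) := by
        have h0 : ((m - qr.num).toNat : ℤ) = m - qr.num :=
          Int.toNat_of_nonneg (by omega)
        calc (((m - qr.num).toNat : ℕ) : ℚ) = (((m - qr.num).toNat : ℤ) : ℚ) := by push_cast; ring
        _ = ((m - qr.num : ℤ) : ℚ) := by rw [h0]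
        _ = (m : ℚ) - (qr.num : ℚ) := by push_cast; ring
      rw [hm, h3, sub_div, Rat.num_div_den]
      ring
    have hsolLB := sol_LB F qr c
    have hh : 0 < (sol F qr c).orderTop :=
      lt_of_lt_of_le (by exact_mod_cast hq) hsolLB.orderTop
    rw [Eop, HahnSeries.coeff_sub, HahnSeries.coeff_smul, hcomp_coeff F _ hh s]
    have hcompz : ∑ᶠ n : ℕ, ((PowerSeries.coeff n F) • (sol F qr c) ^ n).coeff s = 0 := by
      refine finsum_eq_zero_of_forall_eq_zero fun n => ?_
      rcases n with - | m
      · rw [pow_zero, hF0]; simp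
      · rw [HahnSeries.coeff_smul, hkey _ ((sol_Zl F qr c).pow (m + 1)), smul_zero]
    rw [hcompz, smul_zero, hkey _ (Zl.mul (Zl.D hdne (sol_Zl F qr c)) (Zl.ofPS hdne F)),
      zero_sub, neg_zero]

/-- `sol` is nonzero since its coefficient at `qr` is `c ≠ 0`. -/
lemma sol_ne_zero (F : PowerSeries ℂ) (qr : ℚ) {c : ℂ} (hc : c ≠ 0) : sol F qr c ≠ 0 := by
  intro h0
  apply hc
  rw [← sol_coeff_base F qr c, h0, HahnSeries.coeff_zero]

lemma sol_order (F : PowerSeries ℂ) (qr : ℚ) {c : ℂ} (hc : c ≠ 0) :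
    (sol F qr c).order = qr := by
  have hle : (sol F qr c).order ≤ qr :=
    HahnSeries.order_le_of_coeff_ne_zero (by rw [sol_coeff_base]; exact hc)
  have hge : qr ≤ (sol F qr c).order := by
    by_contra hlt
    push_neg at hlt
    have h1 : (sol F qr c).coeff ((sol F qr c).order) ≠ 0 := by
      rw [← HahnSeries.leadingCoeff_eq]
      exact HahnSeries.leadingCoeff_ne_zero.mpr (sol_ne_zero F qr hc)
    exact h1 (sol_LB F qr c _ hlt)
  exact le_antisymm hle hge

end MyAux

/-- for `G ∈ ℂ[[x]]` with `v(G) = 1` and leading coefficient `1`, and any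
`q ∈ ℚ_{>0}`, `c ≠ 0`, there is exactly one Puiseux series `h` with initial term `c·x^q`
satisfying `q·(G ∘ h) = h'·G`. -/
theorem exists_unique_puiseux_solution (G : PowerSeries ℂ)
    (hG0 : PowerSeries.coeff 0 G = 0) (hG1 : PowerSeries.coeff 1 G = 1)
    (q : ℚ) (hq : 0 < q) (c : ℂ) (hc : c ≠ 0) :
    ∃! h : Khat, IsPuiseux h ∧ h ≠ 0 ∧ h.order = q ∧ h.leadingCoeff = c ∧
      (q : ℂ) • hcomp G h = D h * ofPS G := by
  refine ⟨sol G q c, ⟨?_, sol_ne_zero G q hc, sol_order G q hc, ?_, ?_⟩, ?_⟩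
  · -- IsPuiseux
    refine ⟨q.den, q.den_pos, fun t ht => ?_⟩
    exact sol_Zl G q c t ht
  · -- leadingCoeff
    rw [HahnSeries.leadingCoeff_eq, sol_order G q hc, sol_coeff_base]
  · -- the equation
    exact sub_eq_zero.mp (Esol G hG0 hG1 hq c)
  · -- uniqueness
    rintro y ⟨-, hyne, hyorder, hylead, hyeq⟩
    have hyLB : LB q y := fun t ht =>
      HahnSeries.coeff_eq_zero_of_lt_order (by rw [hyorder]; exact ht)
    have hyq : y.coeff q = c := by
      rw [← hyorder, ← HahnSeries.leadingCoeff_eq]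
      exact hylead
    have hEy : Eop G q y = 0 :=
      sub_eq_zero_of_eq hyeq
    by_contra hneq
    set δ := y - sol G q c with hδ
    have hδne : δ ≠ 0 := sub_ne_zero.mpr hneq
    have hδs : δ.coeff δ.order ≠ 0 := by
      rw [← HahnSeries.leadingCoeff_eq]
      exact HahnSeries.leadingCoeff_ne_zero.mpr hδne
    have hlowzero : ∀ t, t ≤ q → δ.coeff t = 0 := by
      intro t ht
      rcases lt_or_eq_of_le ht with h | h
      · rw [hδ, HahnSeries.coeff_sub, hyLB t h, sol_LB G q c t h, sub_zero]
      · rw [hδ, HahnSeries.coeff_sub, h, hyq, sol_coeff_base, sub_self]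
    have hqs : q < δ.order := by
      by_contra hle
      push_neg at hle
      exact hδs (hlowzero _ hle)
    have hagree : ∀ t, t < δ.order → y.coeff t = (sol G q c).coeff t := by
      intro t ht
      have := HahnSeries.coeff_eq_zero_of_lt_order (x := δ) ht
      rw [hδ, HahnSeries.coeff_sub, sub_eq_zero] at this
      exact this
    have hdiff := Ediff G hG0 hG1 hq hyLB (sol_LB G q c) (le_of_lt hqs) hagree
    rw [hEy, Esol G hG0 hG1 hq c, HahnSeries.coeff_zero, sub_zero] at hdiff
    have hf1 : ((q : ℂ) - ((δ.order : ℚ) : ℂ)) ≠ 0 := by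
      rw [sub_ne_zero]
      exact_mod_cast ne_of_lt hqs
    have hf2 : y.coeff δ.order - (sol G q c).coeff δ.order ≠ 0 := by
      rw [← HahnSeries.coeff_sub]
      exact hδs
    exact (mul_ne_zero hf1 hf2) hdiff.symm
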